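/- Let t ≥ 1 be an integer, assume m divides tq+1, and set c := (tq+1)/m, with c ≤ q−1. Then dim_F L(tq+1) = dim_F L(tq−1) + 2. (A basis of L(tq+1) is obtained from a basis of L(tq−1) by adjoining the two monomials x^t and y^c; this shows the complete linear system L((tq+1)Q∞) defines an embedding of C_f.) -/

import Mathlib

open Polynomial

noncomputable section

/-- The affine coordinate ring `R = F[x][y]/(y^q + y - f(x))` of the
Artin-Schreier curve `y^q + y = f(x)`, as a quotient of `F[x][y]`. -/
abbrev ASRing (F : Type*) [Field F] (q : ℕ) (f : F[X]) : Type _ :=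
  AdjoinRoot ((X : (F[X])[X]) ^ q + X - C f)

/-- The image of `x` in `R`. -/
def ASx (F : Type*) [Field F] (q : ℕ) (f : F[X]) : ASRing F q f :=
  AdjoinRoot.of _ X

/-- The image of `y` in `R`. -/
def ASy (F : Type*) [Field F] (q : ℕ) (f : F[X]) : ASRing F q f :=
  AdjoinRoot.root _

/-- `L(s)`: the `F`-linear span in `R` of the monomials `x^i * y^j` with
`i ≥ 0`, `0 ≤ j ≤ q - 1` and `q*i + m*j ≤ s`. -/
def Lspace (F : Type*) [Field F] (q : ℕ) (f : F[X]) (m s : ℕ) :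
    Submodule F (ASRing F q f) :=
  Submodule.span F {r | ∃ i j : ℕ, j ≤ q - 1 ∧ q * i + m * j ≤ s ∧
    r = ASx F q f ^ i * ASy F q f ^ j}

/-- The index finset of monomial exponents `(i, j)` with `j < q` and `q*i + m*j ≤ s`. -/
def ASFinset (q m s : ℕ) : Finset (ℕ × Fin q) :=
  (Finset.range (s + 1) ×ˢ Finset.univ).filter (fun ij => q * ij.1 + m * (ij.2 : ℕ) ≤ s)

lemma nat_two_cases {n w : ℕ} (h0 : 1 ≤ w) (h1 : n ≤ w + 1) (h2 : w - 1 < n) :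
    n = w ∨ n = w + 1 := by omega

lemma nat_succ_not_le_pred {w : ℕ} (h : w + 1 ≤ w - 1) : False := by omega

lemma nat_not_le_pred {w : ℕ} (h0 : 1 ≤ w) (h : w ≤ w - 1) : False := by omega

lemma AS_deg_lt {F : Type*} [Field F] {q : ℕ} (hq2 : 2 ≤ q) (f : F[X]) :
    ((X : (F[X])[X]) - C f).degree < ((X : (F[X])[X]) ^ q).degree := by
  rw [degree_X_pow]
  refine lt_of_le_of_lt ((degree_sub_le _ _).trans (max_le degree_X_le
    (degree_C_le.trans (by norm_num)))) ?_
  exact_mod_cast hq2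

lemma AS_monic {F : Type*} [Field F] {q : ℕ} (hq2 : 2 ≤ q) (f : F[X]) :
    ((X : (F[X])[X]) ^ q + X - C f).Monic := by
  have h1 : ((X : (F[X])[X]) ^ q + X - C f) = X ^ q + (X - C f) := by ring
  rw [h1]
  exact (monic_X_pow q).add_of_left (AS_deg_lt hq2 f)

lemma AS_natDegree {F : Type*} [Field F] {q : ℕ} (hq2 : 2 ≤ q) (f : F[X]) :
    ((X : (F[X])[X]) ^ q + X - C f).natDegree = q := by
  have h1 : ((X : (F[X])[X]) ^ q + X - C f) = X ^ q + (X - C f) := by ring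
  have hd : ((X : (F[X])[X]) ^ q + X - C f).degree = (q : WithBot ℕ) := by
    rw [h1, degree_add_eq_left_of_degree_lt (AS_deg_lt hq2 f), degree_X_pow]
  exact natDegree_eq_of_degree_eq_some hd

lemma Lspace_finrank {F : Type*} [Field F] {q : ℕ} (hq2 : 2 ≤ q) (f : F[X]) (m s : ℕ) :
    Module.finrank F (Lspace F q f m s) = (ASFinset q m s).card := by
  have hg : ((X : (F[X])[X]) ^ q + X - C f).Monic := AS_monic hq2 f
  have hdim : (AdjoinRoot.powerBasis' hg).dim = q := AS_natDegree hq2 f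
  let B : Module.Basis (ℕ × Fin q) F (ASRing F q f) :=
    ((Polynomial.basisMonomials F).smulTower (AdjoinRoot.powerBasis' hg).basis).reindex
      (Equiv.prodCongr (Equiv.refl ℕ) (finCongr hdim))
  have hB : ∀ (i : ℕ) (j : Fin q), B (i, j) = ASx F q f ^ i * ASy F q f ^ (j : ℕ) := by
    intro i j
    have h1 : (Polynomial.basisMonomials F) i = X ^ i := by
      rw [show ((Polynomial.basisMonomials F) i : F[X]) = monomial i 1 from
        congrFun (Polynomial.coe_basisMonomials F) i]
      exact (X_pow_eq_monomial i).symm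
    simp only [B, Module.Basis.reindex_apply, Equiv.prodCongr_symm, Equiv.refl_symm,
      Equiv.prodCongr_apply, Equiv.coe_refl, Prod.map_apply, id_eq,
      Module.Basis.smulTower_apply, PowerBasis.basis_eq_pow, AdjoinRoot.powerBasis'_gen,
      finCongr_symm, finCongr_apply, Fin.coe_cast, h1]
    rw [Algebra.smul_def, AdjoinRoot.algebraMap_eq, map_pow]
    rfl
  have hset : {r | ∃ i j : ℕ, j ≤ q - 1 ∧ q * i + m * j ≤ s ∧
      r = ASx F q f ^ i * ASy F q f ^ j} = (((ASFinset q m s).image B : Finset _) : Set _) := by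
    ext r
    simp only [Set.mem_setOf_eq, Finset.coe_image, Set.mem_image, Finset.mem_coe,
      ASFinset, Finset.mem_filter, Finset.mem_product, Finset.mem_range, Finset.mem_univ,
      and_true, true_and]
    constructor
    · rintro ⟨i, j, hj, hle, rfl⟩
      have hjq : j < q := by omega
      refine ⟨(i, ⟨j, hjq⟩), ⟨?_, hle⟩, hB i ⟨j, hjq⟩⟩
      have h1 : i ≤ q * i := Nat.le_mul_of_pos_left i (by omega)
      exact Nat.lt_succ_of_le (le_trans h1 (le_trans (Nat.le_add_right _ _) hle))
    · rintro ⟨⟨i, j⟩, ⟨hi, hle⟩, rfl⟩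
      exact ⟨i, (j : ℕ), by omega, hle, (hB i j)⟩
  have hli2 : LinearIndependent F
      (fun x : (⇑B '' ((ASFinset q m s : Finset _) : Set (ℕ × Fin q))) => (x : ASRing F q f)) :=
    LinearIndepOn.id_image (B.linearIndependent.comp _ Subtype.val_injective)
  have hli : LinearIndependent F
      ((↑) : (((ASFinset q m s).image B : Finset _) : Set (ASRing F q f)) → ASRing F q f) := by
    rw [Finset.coe_image]; exact hli2
  rw [Lspace, hset, finrank_span_finset_eq_card hli,
    Finset.card_image_of_injective _ B.injective]

theorem stmt_16 (p k q : ℕ) (hp : p.Prime) (hk : 1 ≤ k) (hq : q = p ^ k)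
    (F : Type*) [Field F] [CharP F p]
    (f : F[X]) (m : ℕ) (hm : m = f.natDegree) (hm2 : 2 ≤ m) (hmp : Nat.Coprime m p) (t : ℕ) (ht : 1 ≤ t) (hdvd : m ∣ t * q + 1)
    (c : ℕ) (hc : c = (t * q + 1) / m) (hcq : c ≤ q - 1) :
    Module.finrank F (Lspace F q f m (t * q + 1)) =
      Module.finrank F (Lspace F q f m (t * q - 1)) + 2 := by
  have hq2 : 2 ≤ q := by
    rw [hq]
    calc 2 ≤ p := hp.two_le
    _ ≤ p ^ k := Nat.le_self_pow (by omega) p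
  have hqpos : 0 < q := by omega
  have hmc : m * c = t * q + 1 := by rw [hc]; exact Nat.mul_div_cancel' hdvd
  have hcoprime : Nat.Coprime m q := by rw [hq]; exact hmp.pow_right k
  have htq : q ≤ t * q := Nat.le_mul_of_pos_left q ht
  have hclt : c < q := by omega
  have key : ∀ i j : ℕ, j < q → q * i + m * j ≤ t * q + 1 → t * q - 1 < q * i + m * j →
      (i = t ∧ j = 0) ∨ (i = 0 ∧ j = c) := by
    intro i j hjq h1 h2
    have h3 : q * i + m * j = t * q ∨ q * i + m * j = t * q + 1 :=
      nat_two_cases (le_trans (by omega) htq) h1 h2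
    rcases h3 with h3 | h3
    · left
      have h4 : m * j = t * q - q * i := Nat.eq_sub_of_add_eq' h3
      have hdj : q ∣ m * j := h4 ▸ Nat.dvd_sub ⟨t, mul_comm t q⟩ ⟨i, rfl⟩
      have hj0 : j = 0 := Nat.eq_zero_of_dvd_of_lt (hcoprime.symm.dvd_of_dvd_mul_left hdj) hjq
      subst hj0
      simp only [mul_zero, add_zero] at h3
      exact ⟨Nat.eq_of_mul_eq_mul_left hqpos (h3.trans (mul_comm t q)), rfl⟩
    · right
      have h4 : m * c = q * i + m * j := hmc.trans h3.symm
      have hmod : m * j ≡ m * c [MOD q] := by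
        unfold Nat.ModEq
        rw [h4, Nat.mul_add_mod]
      have hjc : j ≡ c [MOD q] := Nat.ModEq.cancel_left_of_coprime hcoprime.symm hmod
      have hjc' : j = c := by
        unfold Nat.ModEq at hjc
        rwa [Nat.mod_eq_of_lt hjq, Nat.mod_eq_of_lt hclt] at hjc
      rw [hjc'] at h3
      have h5 : q * i = 0 :=
        Nat.add_right_cancel (show q * i + m * c = 0 + m * c by
          rw [Nat.zero_add]; exact h3.trans hmc.symm)
      have := Nat.mul_eq_zero.mp h5
      exact ⟨by omega, hjc'⟩
  have hfin : ASFinset q m (t * q + 1) =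
      insert (t, (⟨0, by omega⟩ : Fin q))
        (insert (0, (⟨c, hclt⟩ : Fin q)) (ASFinset q m (t * q - 1))) := by
    ext ⟨i, j⟩
    simp only [ASFinset, Finset.mem_insert, Finset.mem_filter, Finset.mem_product,
      Finset.mem_range, Finset.mem_univ, and_true, true_and, Prod.mk.injEq, Fin.ext_iff]
    constructor
    · rintro ⟨hi, hle⟩
      by_cases hle' : q * i + m * (j : ℕ) ≤ t * q - 1
      · refine Or.inr (Or.inr ⟨?_, hle'⟩)
        have h1 : i ≤ q * i := Nat.le_mul_of_pos_left i hqpos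
        exact Nat.lt_succ_of_le (le_trans h1 (le_trans (Nat.le_add_right _ _) hle'))
      · rcases key i j j.isLt hle (Nat.not_le.mp hle') with ⟨h1, h2⟩ | ⟨h1, h2⟩
        · exact Or.inl ⟨h1, h2⟩
        · exact Or.inr (Or.inl ⟨h1, h2⟩)
    · rintro (⟨hit, hj0⟩ | ⟨hi0, hjc⟩ | ⟨hi, hle⟩)
      · rw [hit, hj0]
        refine ⟨Nat.lt_succ_of_le (le_trans (Nat.le_mul_of_pos_right t hqpos)
          (Nat.le_succ _)), ?_⟩
        rw [mul_zero, add_zero, mul_comm]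
        exact Nat.le_succ _
      · rw [hi0, hjc]
        refine ⟨Nat.succ_pos _, ?_⟩
        rw [mul_zero, zero_add, hmc]
      · constructor
        · have h2 : t * q - 1 ≤ t * q + 1 := le_trans (Nat.sub_le _ _) (Nat.le_succ _)
          exact lt_of_lt_of_le hi (Nat.succ_le_succ h2)
        · exact le_trans hle (le_trans (Nat.sub_le _ _) (Nat.le_succ _))
  have hnot2 : ((0 : ℕ), (⟨c, hclt⟩ : Fin q)) ∉ ASFinset q m (t * q - 1) := by
    intro hmem
    rw [ASFinset, Finset.mem_filter] at hmem
    have h := hmem.2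
    simp only [mul_zero, zero_add] at h
    rw [hmc] at h
    exact nat_succ_not_le_pred h
  have hnot1 : (t, (⟨0, by omega⟩ : Fin q)) ∉
      insert ((0 : ℕ), (⟨c, hclt⟩ : Fin q)) (ASFinset q m (t * q - 1)) := by
    intro hmem
    rcases Finset.mem_insert.mp hmem with h | h
    · have := congrArg Prod.fst h
      simp at this
      omega
    · rw [ASFinset, Finset.mem_filter] at h
      have h2 := h.2
      simp only [mul_zero, add_zero] at h2
      rw [mul_comm] at h2
      exact nat_not_le_pred (le_trans (by omega) htq) h2
  rw [Lspace_finrank hq2, Lspace_finrank hq2, hfin,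
    Finset.card_insert_of_notMem hnot1, Finset.card_insert_of_notMem hnot2]
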